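/- If r : ℝ → ℂ is the Fourier transform of a probability measure ρ on ℝ that is not a single Dirac mass, then the set D = {t ∈ ℝ : |r(t)| = 1} is discrete (every point of D is isolated in D). -/

import Mathlib

open MeasureTheory Complex

namespace WindingAux

noncomputable def f (t l : ℝ) : ℂ := Complex.exp (-(Complex.I * t * l))

lemma abs_f (t l : ℝ) : ‖f t l‖ = 1 := by
  have h : -(Complex.I * (t : ℂ) * (l : ℂ)) = ((-(t * l) : ℝ) : ℂ) * Complex.I := by
    push_cast; ring
  rw [f, h, Complex.norm_exp_ofReal_mul_I]

lemma cont_f_l (t : ℝ) : Continuous (f t) := by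
  unfold f; fun_prop

lemma cont_f_t (l : ℝ) : Continuous fun t => f t l := by
  unfold f; fun_prop

lemma integrable_f (ρ : Measure ℝ) [IsProbabilityMeasure ρ] (t : ℝ) :
    Integrable (f t) ρ :=
  (integrable_const 1).mono' (cont_f_l t).aestronglyMeasurable
    (Filter.Eventually.of_forall fun l => by
      rw [abs_f])

lemma f_add (s t l : ℝ) : f (s + t) l = f s l * f t l := by
  unfold f
  rw [← Complex.exp_add]
  congr 1
  push_cast; ring

lemma f_zero (l : ℝ) : f 0 l = 1 := by
  simp [f]

/-- Equality case in the triangle inequality: if the characteristic function has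
modulus one at `t`, then `f t` is a.e. constant. -/
lemma ae_const (ρ : Measure ℝ) [IsProbabilityMeasure ρ] {t : ℝ}
    (h : ‖∫ l, f t l ∂ρ‖ = 1) :
    ∀ᵐ l ∂ρ, f t l = ∫ l', f t l' ∂ρ := by
  set c : ℂ := ∫ l', f t l' ∂ρ with hc
  have hcc : (starRingEnd ℂ) c * c = 1 := by
    rw [mul_comm, Complex.mul_conj, Complex.normSq_eq_norm_sq, h]
    norm_num
  set g : ℝ → ℝ := fun l => ((starRingEnd ℂ) c * f t l).re with hg
  have hgint : Integrable g ρ := by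
    have : Integrable (fun l => (starRingEnd ℂ) c * f t l) ρ :=
      (integrable_f ρ t).const_mul _
    exact this.re
  have hgle : ∀ l, g l ≤ 1 := by
    intro l
    calc g l ≤ ‖(starRingEnd ℂ) c * f t l‖ := Complex.re_le_norm _
    _ = ‖c‖ * ‖f t l‖ := by rw [norm_mul, Complex.norm_conj]
    _ = 1 := by rw [h, abs_f, mul_one]
  have hgeq : ∫ l, g l ∂ρ = 1 := by
    rw [hg]
    have : ∫ l, ((starRingEnd ℂ) c * f t l).re ∂ρ
        = ((starRingEnd ℂ) c * ∫ l, f t l ∂ρ).re := by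
      rw [← integral_const_mul]
      exact integral_re ((integrable_f ρ t).const_mul _)
    rw [this, ← hc, hcc]
    simp
  have hzero : ∫ l, (1 - g l) ∂ρ = 0 := by
    rw [integral_sub (integrable_const 1) hgint]
    simp [hgeq]
  have hae : ((fun _ : ℝ => (1 : ℝ)) - g) =ᵐ[ρ] 0 :=
    (integral_eq_zero_iff_of_nonneg_ae
      (Filter.Eventually.of_forall fun l => by
        simp only [Pi.sub_apply, Pi.zero_apply]; linarith [hgle l])
      ((integrable_const 1).sub hgint)).mp hzero
  filter_upwards [hae] with l hl
  have hgl : g l = 1 := by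
    have h1 : (1 : ℝ) - g l = 0 := hl
    linarith
  -- from re = 1 and modulus 1, conclude conj c * f t l = 1
  have habs : ‖(starRingEnd ℂ) c * f t l‖ = 1 := by
    rw [norm_mul, Complex.norm_conj, h, abs_f, mul_one]
  have him : ((starRingEnd ℂ) c * f t l).im = 0 := by
    have hnsq : Complex.normSq ((starRingEnd ℂ) c * f t l) = 1 := by
      rw [Complex.normSq_eq_norm_sq, habs]; norm_num
    have hre : ((starRingEnd ℂ) c * f t l).re = 1 := hgl
    rw [Complex.normSq_apply, hre] at hnsq
    nlinarith [sq_nonneg ((starRingEnd ℂ) c * f t l).im]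
  have hone : (starRingEnd ℂ) c * f t l = 1 := by
    apply Complex.ext
    · exact hgl
    · simpa using him
  calc f t l = (c * (starRingEnd ℂ) c) * f t l := by
        rw [mul_comm c, hcc, one_mul]
  _ = c * ((starRingEnd ℂ) c * f t l) := by ring
  _ = c := by rw [hone, mul_one]

end WindingAux

open WindingAux

theorem winding_D_discrete (ρ : Measure ℝ) [IsProbabilityMeasure ρ]
    (hnd : ∀ φ : ℝ, ρ ≠ Measure.dirac φ)
    (r : ℝ → ℂ)
    (hr : ∀ t : ℝ, r t = ∫ l : ℝ, Complex.exp (-(Complex.I * t * l)) ∂ρ) :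
    ∀ t : ℝ, ‖r t‖ = 1 →
      ∃ ε > 0, ∀ s : ℝ, ‖r s‖ = 1 → |s - t| < ε → s = t := by
  have hrf : ∀ t : ℝ, r t = ∫ l, f t l ∂ρ := hr
  -- the key a.e. constancy statement
  have key : ∀ t : ℝ, ‖r t‖ = 1 → (∀ᵐ l ∂ρ, f t l = r t) := by
    intro t ht
    rw [hrf t] at ht ⊢
    exact ae_const ρ ht
  -- D is an additive subgroup
  have add_mem' : ∀ s t : ℝ, ‖r s‖ = 1 → ‖r t‖ = 1 →
      ‖r (s + t)‖ = 1 := by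
    intro s t hs ht
    have h1 := key s hs
    have h2 := key t ht
    have : r (s + t) = r s * r t := by
      rw [hrf (s + t)]
      have : ∫ l, f (s + t) l ∂ρ = ∫ _l, r s * r t ∂ρ := by
        apply integral_congr_ae
        filter_upwards [h1, h2] with l hl1 hl2
        rw [f_add, hl1, hl2]
      rw [this, integral_const]
      simp
    rw [this, norm_mul, hs, ht, mul_one]
  have neg_mem' : ∀ t : ℝ, ‖r t‖ = 1 → ‖r (-t)‖ = 1 := by
    intro t ht
    have hconj : ∀ l : ℝ, f (-t) l = (starRingEnd ℂ) (f t l) := by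
      intro l
      rw [f, f, ← Complex.exp_conj]
      congr 1
      simp only [map_neg, map_mul, Complex.conj_I, Complex.conj_ofReal]
      push_cast
      ring
    have : r (-t) = (starRingEnd ℂ) (r t) := by
      rw [hrf (-t), hrf t, ← integral_conj]
      exact integral_congr_ae (Filter.Eventually.of_forall hconj)
    rw [this, Complex.norm_conj, ht]
  have zero_mem' : ‖r 0‖ = 1 := by
    have : r 0 = 1 := by
      rw [hrf 0]
      simp only [f_zero, integral_const]
      simp
    rw [this, norm_one]
  set D : AddSubgroup ℝ :=
    { carrier := {t : ℝ | ‖r t‖ = 1}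
      add_mem' := fun hs ht => add_mem' _ _ hs ht
      zero_mem' := zero_mem'
      neg_mem' := fun ht => neg_mem' _ ht } with hD
  -- r is continuous
  have hrcont : Continuous r := by
    have : r = fun t => ∫ l, f t l ∂ρ := funext hrf
    rw [this]
    exact continuous_of_dominated (fun t => (cont_f_l t).aestronglyMeasurable)
      (fun t => Filter.Eventually.of_forall fun l => by
        rw [abs_f])
      (integrable_const 1)
      (Filter.Eventually.of_forall fun l => cont_f_t l)
  have hDclosed : IsClosed (D : Set ℝ) := by
    have : (D : Set ℝ) = (fun t => ‖r t‖) ⁻¹' {1} := rfl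
    rw [this]
    exact IsClosed.preimage (continuous_norm.comp hrcont) isClosed_singleton
  -- not every t has |r t| = 1
  have hnotall : ¬ (∀ t : ℝ, ‖r t‖ = 1) := by
    intro hall
    -- get a.e. constancy at t = 1 and t = √2
    have h1 := key 1 (hall 1)
    have h2 := key (Real.sqrt 2) (hall (Real.sqrt 2))
    have hne : ρ ≠ 0 := IsProbabilityMeasure.ne_zero ρ
    haveI : (MeasureTheory.ae ρ).NeBot := ae_neBot.mpr hne
    obtain ⟨φ, hφ1, hφ2⟩ := (h1.and h2).exists
    -- uniqueness: any l with both constraints equals φ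
    have huniq : ∀ l : ℝ, f 1 l = r 1 → f (Real.sqrt 2) l = r (Real.sqrt 2) → l = φ := by
      intro l hl1 hl2
      have e1 : f 1 l = f 1 φ := by rw [hl1, hφ1]
      have e2 : f (Real.sqrt 2) l = f (Real.sqrt 2) φ := by rw [hl2, hφ2]
      rw [f, f, Complex.exp_eq_exp_iff_exists_int] at e1 e2
      obtain ⟨n, hn⟩ := e1
      obtain ⟨m, hm⟩ := e2
      -- extract real equations
      have hn' : (φ : ℝ) - l = n * (2 * Real.pi) := by
        have : ((φ - l : ℝ) : ℂ) * Complex.I = ((n * (2 * Real.pi) : ℝ) : ℂ) * Complex.I := by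
          push_cast
          push_cast at hn
          linear_combination hn
        have := mul_right_cancel₀ Complex.I_ne_zero this
        exact_mod_cast this
      have hm' : Real.sqrt 2 * ((φ : ℝ) - l) = m * (2 * Real.pi) := by
        have : ((Real.sqrt 2 * (φ - l) : ℝ) : ℂ) * Complex.I
            = ((m * (2 * Real.pi) : ℝ) : ℂ) * Complex.I := by
          push_cast
          linear_combination hm
        have := mul_right_cancel₀ Complex.I_ne_zero this
        exact_mod_cast this
      -- √2 * n = m, with √2 irrational, forces n = 0
      have hsm : Real.sqrt 2 * n = m := by
        have h3 : (Real.sqrt 2 * n) * (2 * Real.pi) = m * (2 * Real.pi) := by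
          calc (Real.sqrt 2 * n) * (2 * Real.pi)
              = Real.sqrt 2 * (n * (2 * Real.pi)) := by ring
          _ = Real.sqrt 2 * ((φ : ℝ) - l) := by rw [hn']
          _ = m * (2 * Real.pi) := hm'
        exact mul_right_cancel₀ (by positivity) h3
      have hn0 : n = 0 := by
        by_contra hn0
        apply irrational_sqrt_two
        refine ⟨(m : ℚ) / (n : ℚ), ?_⟩
        have hnR : ((n : ℤ) : ℝ) ≠ 0 := Int.cast_ne_zero.mpr hn0
        push_cast
        field_simp
        linarith [hsm]
      have : (φ : ℝ) - l = 0 := by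
        rw [hn', hn0]; simp
      linarith
    -- hence ρ-a.e. l = φ
    have haeφ : ∀ᵐ l ∂ρ, l = φ := by
      filter_upwards [h1, h2] with l hl1 hl2
      exact huniq l hl1 hl2
    -- so ρ = dirac φ
    apply hnd φ
    have hφc : ρ {φ}ᶜ = 0 := by
      have hs : ({φ} : Set ℝ)ᶜ = {l : ℝ | ¬ l = φ} := by
        ext l; simp
      rw [hs]
      exact ae_iff.mp haeφ
    have hφ1' : ρ {φ} = 1 := (prob_compl_eq_zero_iff (measurableSet_singleton φ)).mp hφc
    ext s hs
    rw [Measure.dirac_apply' φ hs]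
    by_cases hφs : φ ∈ s
    · have hsc : sᶜ ⊆ ({φ} : Set ℝ)ᶜ := by
        intro x hx
        simp only [Set.mem_compl_iff, Set.mem_singleton_iff]
        rintro rfl
        exact hx hφs
      have : ρ sᶜ = 0 := le_antisymm (le_trans (measure_mono hsc) (le_of_eq hφc)) (zero_le)
      rw [(prob_compl_eq_zero_iff hs).mp this]
      simp [Set.indicator_of_mem hφs]
    · have hsub : s ⊆ ({φ} : Set ℝ)ᶜ := by
        intro x hx
        simp only [Set.mem_compl_iff, Set.mem_singleton_iff]
        rintro rfl
        exact hφs hx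
      have : ρ s = 0 := le_antisymm (le_trans (measure_mono hsub) (le_of_eq hφc)) (zero_le)
      rw [this]
      simp [Set.indicator_of_notMem hφs]
  -- dichotomy
  rcases AddSubgroup.dense_or_cyclic D with hdense | ⟨a, ha⟩
  · exfalso
    apply hnotall
    intro t
    have : (D : Set ℝ) = Set.univ := by
      have := hdense.closure_eq
      rw [hDclosed.closure_eq] at this
      exact this
    have ht : t ∈ (D : Set ℝ) := this ▸ Set.mem_univ t
    exact ht
  · intro t ht
    rcases eq_or_ne a 0 with rfl | ha0
    · refine ⟨1, one_pos, fun s hs _ => ?_⟩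
      have hsD : s ∈ D := hs
      have htD : t ∈ D := ht
      rw [ha] at hsD htD
      rw [AddSubgroup.closure_singleton_zero] at hsD htD
      have h1 : s = 0 := by simpa using hsD
      have h2 : t = 0 := by simpa using htD
      rw [h1, h2]
    · refine ⟨|a|, abs_pos.mpr ha0, fun s hs hst => ?_⟩
      have hsD : s ∈ D := hs
      have htD : t ∈ D := ht
      have hdiff : s - t ∈ D := sub_mem hsD htD
      rw [ha, AddSubgroup.mem_closure_singleton] at hdiff
      obtain ⟨k, hk⟩ := hdiff
      have hk' : (k : ℝ) * a = s - t := by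
        rw [← hk]; simp [zsmul_eq_mul]
      have : |(k : ℝ)| * |a| < |a| := by
        rw [← abs_mul, hk']
        exact hst
      have hkabs : |(k : ℝ)| < 1 := by
        by_contra h
        push_neg at h
        nlinarith [abs_pos.mpr ha0]
      have : k = 0 := by
        by_contra h
        have : (1 : ℝ) ≤ |(k : ℝ)| := by
          have : (1 : ℤ) ≤ |k| := Int.one_le_abs h
          exact_mod_cast (by exact_mod_cast this : (1 : ℝ) ≤ |(k : ℝ)|)
        linarith
      rw [this] at hk'
      norm_num at hk'
      linarith
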